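/- Let (Ω, μ) be a probability space, Γ ⊆ Ω a measurable set with μ(Γ) > 0, and for each parameter x let S¹_x, S²_x : Ω → [−1,1] be measurable with S¹_c·χ_Γ = −S²_c·χ_Γ μ-a.e. for all c. Define the conditional correlation ⟨S¹_a S²_b⟩ := E[S¹_a S²_b χ_Γ]/μ(Γ). Then |⟨S¹_a S²_b⟩ − ⟨S¹_c S²_b⟩| − ⟨S¹_a S²_c⟩ ≤ 1/μ(Γ). -/

import Mathlib

open MeasureTheory

theorem bell_inequality_conditioned {Ω : Type*} [MeasurableSpace Ω] (μ : Measure Ω)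
    [IsProbabilityMeasure μ] (Γ : Set Ω) (hΓ : MeasurableSet Γ) (hΓpos : 0 < μ Γ)
    {ι : Type*} (S1 S2 : ι → Ω → ℝ)
    (hm1 : ∀ x, Measurable (S1 x)) (hm2 : ∀ x, Measurable (S2 x))
    (hb1 : ∀ x ω, S1 x ω ∈ Set.Icc (-1 : ℝ) 1)
    (hb2 : ∀ x ω, S2 x ω ∈ Set.Icc (-1 : ℝ) 1)
    (hsinglet : ∀ c, (fun ω => S1 c ω * Set.indicator Γ (fun _ => (1:ℝ)) ω)
        =ᵐ[μ] fun ω => -(S2 c ω * Set.indicator Γ (fun _ => (1:ℝ)) ω))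
    (a b c : ι) :
    |((∫ ω, S1 a ω * S2 b ω * Set.indicator Γ (fun _ => (1:ℝ)) ω ∂μ) / (μ Γ).toReal) -
        (∫ ω, S1 c ω * S2 b ω * Set.indicator Γ (fun _ => (1:ℝ)) ω ∂μ) / (μ Γ).toReal| -
      (∫ ω, S1 a ω * S2 c ω * Set.indicator Γ (fun _ => (1:ℝ)) ω ∂μ) / (μ Γ).toReal
      ≤ 1 / (μ Γ).toReal := by
  set χ : Ω → ℝ := Set.indicator Γ (fun _ => (1:ℝ)) with hχdef
  have hχmeas : Measurable χ := measurable_const.indicator hΓ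
  have hχ01 : ∀ ω, χ ω = 0 ∨ χ ω = 1 := by
    intro ω
    by_cases h : ω ∈ Γ
    · right; simp [hχdef, Set.indicator_of_mem h]
    · left; simp [hχdef, Set.indicator_of_notMem h]
  -- integrability of bounded products
  have hint : ∀ (f g : Ω → ℝ), Measurable f → Measurable g →
      (∀ ω, |f ω| ≤ 1) → (∀ ω, |g ω| ≤ 1) →
      Integrable (fun ω => f ω * g ω * χ ω) μ := by
    intro f g hf hg hfb hgb
    refine Integrable.mono' (integrable_const (1:ℝ))
      ((hf.mul hg).mul hχmeas).aestronglyMeasurable ?_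
    filter_upwards with ω
    have h1 := hfb ω; have h2 := hgb ω
    have h3 : |χ ω| ≤ 1 := by rcases hχ01 ω with h | h <;> simp [h]
    have h4 : |f ω| * |g ω| ≤ 1 := mul_le_one₀ h1 (abs_nonneg _) h2
    calc ‖f ω * g ω * χ ω‖ = |f ω| * |g ω| * |χ ω| := by
          simp [Real.norm_eq_abs, abs_mul]
      _ ≤ 1 := mul_le_one₀ h4 (abs_nonneg _) h3
  have hb1' : ∀ x ω, |S1 x ω| ≤ 1 := fun x ω =>
    abs_le.2 ⟨(hb1 x ω).1, (hb1 x ω).2⟩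
  have hb2' : ∀ x ω, |S2 x ω| ≤ 1 := fun x ω =>
    abs_le.2 ⟨(hb2 x ω).1, (hb2 x ω).2⟩
  have hintf := hint (S1 a) (S2 b) (hm1 a) (hm2 b) (hb1' a) (hb2' b)
  have hintg := hint (S1 c) (S2 b) (hm1 c) (hm2 b) (hb1' c) (hb2' b)
  have hintAC := hint (S1 a) (S1 c) (hm1 a) (hm1 c) (hb1' a) (hb1' c)
  -- rewrite the third integral using the singlet condition
  have hsing : (fun ω => S1 a ω * S2 c ω * χ ω)
      =ᵐ[μ] fun ω => -(S1 a ω * S1 c ω * χ ω) := by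
    filter_upwards [hsinglet c] with ω hω
    have h2 : S2 c ω * χ ω = -(S1 c ω * χ ω) := by linarith [hω]
    have : S1 a ω * (S2 c ω * χ ω) = S1 a ω * (-(S1 c ω * χ ω)) := by rw [h2]
    nlinarith [this]
  have hInth : (∫ ω, S1 a ω * S2 c ω * χ ω ∂μ)
      = -∫ ω, S1 a ω * S1 c ω * χ ω ∂μ := by
    rw [integral_congr_ae hsing, integral_neg]
  -- pointwise Bell bound
  have hpt : ∀ ω, |S1 a ω * S2 b ω * χ ω - S1 c ω * S2 b ω * χ ω|
      + S1 a ω * S1 c ω * χ ω ≤ χ ω := by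
    intro ω
    rcases hχ01 ω with h | h
    · simp [h]
    · rw [h]
      set A := S1 a ω; set B := S2 b ω; set C := S1 c ω
      have hA := hb1 a ω; have hB := hb2 b ω; have hC := hb1 c ω
      simp only [mul_one]
      have h1 : |A * B - C * B| ≤ |A - C| := by
        rw [← sub_mul, abs_mul]
        calc |A - C| * |B| ≤ |A - C| * 1 := by
              exact mul_le_mul_of_nonneg_left (hb2' b ω) (abs_nonneg _)
          _ = |A - C| := mul_one _
      have h2 : |A - C| ≤ 1 - A * C := by
        rw [abs_le]
        constructor <;> nlinarith [hA.1, hA.2, hC.1, hC.2]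
      linarith
  -- integral bound
  have hIntχ : (∫ ω, χ ω ∂μ) = (μ Γ).toReal := by
    rw [hχdef]; exact integral_indicator_one (μ := μ) hΓ
  have hχle : (μ Γ).toReal ≤ 1 := by
    have := prob_le_one (μ := μ) (s := Γ)
    simpa using ENNReal.toReal_mono (by simp) this
  have hintχ : Integrable χ μ := by
    refine Integrable.mono' (integrable_const (1:ℝ)) hχmeas.aestronglyMeasurable ?_
    filter_upwards with ω
    rcases hχ01 ω with h | h <;> simp [h]
  have hmain : |(∫ ω, S1 a ω * S2 b ω * χ ω ∂μ) - ∫ ω, S1 c ω * S2 b ω * χ ω ∂μ|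
      - (∫ ω, S1 a ω * S2 c ω * χ ω ∂μ) ≤ 1 := by
    rw [hInth, sub_neg_eq_add, ← integral_sub hintf hintg]
    have habs : |∫ ω, (S1 a ω * S2 b ω * χ ω - S1 c ω * S2 b ω * χ ω) ∂μ|
        ≤ ∫ ω, |S1 a ω * S2 b ω * χ ω - S1 c ω * S2 b ω * χ ω| ∂μ := by
      simpa [Real.norm_eq_abs] using
        norm_integral_le_integral_norm
          (fun ω => S1 a ω * S2 b ω * χ ω - S1 c ω * S2 b ω * χ ω) (μ := μ)
    have hintfg : Integrable (fun ω => |S1 a ω * S2 b ω * χ ω - S1 c ω * S2 b ω * χ ω|) μ :=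
      (hintf.sub hintg).abs
    have hsum : (∫ ω, |S1 a ω * S2 b ω * χ ω - S1 c ω * S2 b ω * χ ω| ∂μ)
        + (∫ ω, S1 a ω * S1 c ω * χ ω ∂μ) ≤ ∫ ω, χ ω ∂μ := by
      rw [← integral_add hintfg hintAC]
      exact integral_mono (hintfg.add hintAC) hintχ hpt
    rw [hIntχ] at hsum
    linarith
  -- divide by μ Γ
  have hd : 0 < (μ Γ).toReal := ENNReal.toReal_pos hΓpos.ne' (measure_ne_top μ Γ)
  rw [div_sub_div_same, abs_div, abs_of_pos hd, div_sub_div_same]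
  exact div_le_div_of_nonneg_right hmain hd.le
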